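/- arXiv:1602.06042 — 2 statements merged into one kernel-verified Lean document; each statement's English description precedes it below -/
import Mathlib

section
/- Let z ∈ ℝ^p, let k* ≥ 1, and let S* ⊆ {1, …, p} satisfy |G-supp(S*)| ≤ k*. Let i_1, …, i_k be a greedy selection for z, let 1 ≤ k̃ < k, let B = G_{i_1} ∪ ⋯ ∪ G_{i_{k̃}} and S = G_{i_1} ∪ ⋯ ∪ G_{i_k}. If ‖z_B‖² ≥ ‖z_{S*}‖² − ε for some ε ≥ 0, then ‖z_{S*\S}‖²/k* − ε/(k − k̃) ≤ ‖z_{S\S*}‖²/(k − k̃). -/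
open Finset

noncomputable section

/-- The restriction of a vector to a coordinate set: agrees with `z` on `S`, zero off `S`. -/
def restrict {p : ℕ} (z : EuclideanSpace ℝ (Fin p)) (S : Finset (Fin p)) :
    EuclideanSpace ℝ (Fin p) :=
  WithLp.toLp 2 (fun i => if i ∈ S then z i else 0)

open Classical in
/-- The support of a vector, as a finite set. -/
noncomputable def suppF {p : ℕ} (z : EuclideanSpace ℝ (Fin p)) : Finset (Fin p) :=
  Finset.univ.filter (fun i => z i ≠ 0)

/-- `w` is `k`-group-sparse w.r.t. the groups `G`. -/
def GroupSparse {p M : ℕ} (G : Fin M → Finset (Fin p)) (k : ℕ)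
    (w : EuclideanSpace ℝ (Fin p)) : Prop :=
  ∃ A : Finset (Fin M), A.card ≤ k ∧ suppF w ⊆ A.biUnion G

/-- `B_j`: the union of the first `j` selected groups. -/
def partialUnion {p M m : ℕ} (G : Fin M → Finset (Fin p)) (idx : Fin m → Fin M) (j : ℕ) :
    Finset (Fin p) :=
  (Finset.univ.filter (fun t : Fin m => (t : ℕ) < j)).biUnion (fun t => G (idx t))

/-- `idx` is a greedy selection for `z` (Algorithm 2 of the paper): at each step `j`,
the selected group maximizes the norm of `z` restricted to the yet-uncovered part. -/
def IsGreedySelection {p M m : ℕ} (G : Fin M → Finset (Fin p))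
    (z : EuclideanSpace ℝ (Fin p)) (idx : Fin m → Fin M) : Prop :=
  ∀ j : Fin m, ∀ ℓ : Fin M,
    ‖restrict z (G ℓ \ partialUnion G idx (j : ℕ))‖ ≤
      ‖restrict z (G (idx j) \ partialUnion G idx (j : ℕ))‖

/-- `w` is an exact projection of `z` onto `k`-group-sparse vectors. -/
def IsExactProj {p M : ℕ} (G : Fin M → Finset (Fin p)) (k : ℕ)
    (z w : EuclideanSpace ℝ (Fin p)) : Prop :=
  GroupSparse G k w ∧ ∀ w', GroupSparse G k w' → ‖w - z‖ ≤ ‖w' - z‖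

/-- `f` satisfies restricted strong convexity / smoothness of order `k'`
with constants `α ≤ L`. -/
def RSCRSS {p M : ℕ} (G : Fin M → Finset (Fin p)) (k' : ℕ) (α L : ℝ)
    (f : EuclideanSpace ℝ (Fin p) → ℝ) : Prop :=
  ContDiff ℝ 2 f ∧
  ∀ w : EuclideanSpace ℝ (Fin p), GroupSparse G k' w →
    ∀ v : EuclideanSpace ℝ (Fin p),
      α * ‖v‖ ^ 2 ≤ iteratedFDeriv ℝ 2 f w ![v, v] ∧
      iteratedFDeriv ℝ 2 f w ![v, v] ≤ L * ‖v‖ ^ 2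

def nsq {p : ℕ} (z : EuclideanSpace ℝ (Fin p)) (S : Finset (Fin p)) : ℝ :=
  ∑ i ∈ S, (z i) ^ 2

lemma nsq_nonneg {p : ℕ} (z : EuclideanSpace ℝ (Fin p)) (S : Finset (Fin p)) :
    0 ≤ nsq z S := Finset.sum_nonneg fun i _ => sq_nonneg _

lemma norm_restrict_sq {p : ℕ} (z : EuclideanSpace ℝ (Fin p)) (S : Finset (Fin p)) :
    ‖restrict z S‖ ^ 2 = nsq z S := by
  rw [EuclideanSpace.norm_eq, Real.sq_sqrt (Finset.sum_nonneg fun i _ => by positivity)]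
  unfold _root_.restrict nsq
  have : ∀ i : Fin p, ‖if i ∈ S then z i else 0‖ ^ 2 = if i ∈ S then (z i)^2 else 0 := by
    intro i; split <;> simp [sq_abs]
  simp only [WithLp.ofLp_toLp, this, Finset.sum_ite_mem, Finset.univ_inter]

lemma nsq_mono {p : ℕ} (z : EuclideanSpace ℝ (Fin p)) {A B : Finset (Fin p)}
    (h : A ⊆ B) : nsq z A ≤ nsq z B :=
  Finset.sum_le_sum_of_subset_of_nonneg h (fun i _ _ => sq_nonneg _)

lemma nsq_union_disjoint {p : ℕ} (z : EuclideanSpace ℝ (Fin p)) {A B : Finset (Fin p)}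
    (h : Disjoint A B) : nsq z (A ∪ B) = nsq z A + nsq z B :=
  Finset.sum_union h

lemma nsq_union_le {p : ℕ} (z : EuclideanSpace ℝ (Fin p)) (A B : Finset (Fin p)) :
    nsq z (A ∪ B) ≤ nsq z A + nsq z B := by
  classical
  rw [show A ∪ B = A ∪ (B \ A) by simp]
  rw [nsq_union_disjoint z (Finset.disjoint_sdiff)]
  exact add_le_add_right (nsq_mono z (Finset.sdiff_subset)) _

lemma nsq_subset_biUnion {p M : ℕ} (z : EuclideanSpace ℝ (Fin p))
    (A : Finset (Fin M)) (f : Fin M → Finset (Fin p)) (S : Finset (Fin p))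
    (h : S ⊆ A.biUnion f) : nsq z S ≤ ∑ ℓ ∈ A, nsq z (f ℓ) := by
  refine le_trans (nsq_mono z h) ?_
  classical
  clear h
  induction A using Finset.induction with
  | empty => simp [nsq]
  | @insert a s ha ih =>
      rw [Finset.biUnion_insert, Finset.sum_insert ha]
      exact le_trans (nsq_union_le z _ _) (add_le_add_right ih _)

lemma partialUnion_mono {p M m : ℕ} (G : Fin M → Finset (Fin p)) (idx : Fin m → Fin M)
    {j j' : ℕ} (h : j ≤ j') : partialUnion G idx j ⊆ partialUnion G idx j' := by
  apply Finset.biUnion_subset_biUnion_of_subset_left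
  intro t ht
  simp only [Finset.mem_filter, Finset.mem_univ, true_and] at ht ⊢
  omega

lemma partialUnion_succ {p M m : ℕ} (G : Fin M → Finset (Fin p)) (idx : Fin m → Fin M)
    {j : ℕ} (hj : j < m) :
    partialUnion G idx (j + 1) = partialUnion G idx j ∪ G (idx ⟨j, hj⟩) := by
  ext i
  simp only [partialUnion, Finset.mem_biUnion, Finset.mem_filter, Finset.mem_univ, true_and,
    Finset.mem_union]
  constructor
  · rintro ⟨t, ht, hi⟩
    rcases Nat.lt_succ_iff_lt_or_eq.mp ht with h | h
    · exact Or.inl ⟨t, h, hi⟩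
    · right
      have hte : (⟨j, hj⟩ : Fin m) = t := by ext; exact h.symm
      rwa [hte]
  · rintro (⟨t, ht, hi⟩ | hi)
    · exact ⟨t, Nat.lt_succ_of_lt ht, hi⟩
    · exact ⟨⟨j, hj⟩, Nat.lt_succ_self j, hi⟩


lemma step_bound {p M k : ℕ} (G : Fin M → Finset (Fin p)) (z : EuclideanSpace ℝ (Fin p))
    (idx : Fin k → Fin M) (hgreedy : IsGreedySelection G z idx)
    (kstar : ℕ) (A : Finset (Fin M)) (hA : A.card ≤ kstar) (Sstar : Finset (Fin p))
    (hS : Sstar ⊆ A.biUnion G) (j : Fin k) :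
    nsq z (Sstar \ partialUnion G idx (j : ℕ)) ≤
      (kstar : ℝ) * nsq z (G (idx j) \ partialUnion G idx (j : ℕ)) := by
  set B := partialUnion G idx (j : ℕ) with hBdef
  have hsub : Sstar \ B ⊆ A.biUnion (fun ℓ => G ℓ \ B) := by
    intro i hi
    simp only [Finset.mem_sdiff] at hi
    obtain ⟨ℓ, hℓ, hiℓ⟩ := Finset.mem_biUnion.mp (hS hi.1)
    exact Finset.mem_biUnion.mpr ⟨ℓ, hℓ, Finset.mem_sdiff.mpr ⟨hiℓ, hi.2⟩⟩
  refine le_trans (nsq_subset_biUnion z A _ _ hsub) ?_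
  have hle : ∀ ℓ ∈ A, nsq z (G ℓ \ B) ≤ nsq z (G (idx j) \ B) := by
    intro ℓ _
    rw [← norm_restrict_sq, ← norm_restrict_sq]
    exact pow_le_pow_left₀ (norm_nonneg _) (hgreedy j ℓ) 2
  calc ∑ ℓ ∈ A, nsq z (G ℓ \ B) ≤ ∑ _ℓ ∈ A, nsq z (G (idx j) \ B) := Finset.sum_le_sum hle
    _ = (A.card : ℝ) * nsq z (G (idx j) \ B) := by rw [Finset.sum_const, nsmul_eq_mul]
    _ ≤ (kstar : ℝ) * nsq z (G (idx j) \ B) := by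
        apply mul_le_mul_of_nonneg_right _ (nsq_nonneg z _)
        exact_mod_cast hA


/-- Lemma `ht_large1` of the paper: with `B = G_{i_1} ∪ ⋯ ∪ G_{i_k̃}` and
`S = G_{i_1} ∪ ⋯ ∪ G_{i_k}` from a greedy selection for `z`, if `‖z_B‖² ≥ ‖z_{S*}‖² − ε`,
then `‖z_{S*\S}‖²/k* − ε/(k − k̃) ≤ ‖z_{S\S*}‖²/(k − k̃)`. -/
theorem stmt_3 (p M : ℕ) (hp : 1 ≤ p) (hM : 1 ≤ M)
    (G : Fin M → Finset (Fin p)) (hcov : ∀ i : Fin p, ∃ j : Fin M, i ∈ G j)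
    (z : EuclideanSpace ℝ (Fin p)) (kstar : ℕ) (hkstar : 1 ≤ kstar)
    (Sstar : Finset (Fin p))
    (hSstar : ∃ A : Finset (Fin M), A.card ≤ kstar ∧ Sstar ⊆ A.biUnion G)
    (k : ℕ) (idx : Fin k → Fin M) (hgreedy : IsGreedySelection G z idx)
    (ktil : ℕ) (hktil1 : 1 ≤ ktil) (hktil2 : ktil < k)
    (ε : ℝ) (hε : 0 ≤ ε)
    (hB : ‖restrict z Sstar‖ ^ 2 - ε ≤ ‖restrict z (partialUnion G idx ktil)‖ ^ 2) :
    ‖restrict z (Sstar \ partialUnion G idx k)‖ ^ 2 / (kstar : ℝ) -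
        ε / ((k : ℝ) - (ktil : ℝ)) ≤
      ‖restrict z (partialUnion G idx k \ Sstar)‖ ^ 2 / ((k : ℝ) - (ktil : ℝ)) := by
  classical
  obtain ⟨A, hA, hSsub⟩ := hSstar
  rw [norm_restrict_sq, norm_restrict_sq] at hB ⊢
  set S : Finset (Fin p) := partialUnion G idx k with hSdef
  set a : ℝ := nsq z (Sstar \ S) with hadef
  set b : ℝ := nsq z (S \ Sstar) with hbdef
  have hK : (0 : ℝ) < kstar := by exact_mod_cast hkstar
  have ha : 0 ≤ a := nsq_nonneg z _
  -- per-step gain lower bound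
  have gain_lb : ∀ n : ℕ, (hn : n < k) →
      a / kstar ≤ nsq z (G (idx ⟨n, hn⟩) \ partialUnion G idx n) := by
    intro n hn
    rw [div_le_iff₀ hK]
    have h1 : a ≤ nsq z (Sstar \ partialUnion G idx n) := by
      apply nsq_mono
      exact Finset.sdiff_subset_sdiff (le_refl _) (partialUnion_mono G idx (le_of_lt hn))
    have h2 := step_bound G z idx hgreedy kstar A hA Sstar hSsub ⟨n, hn⟩
    rw [mul_comm] at h2
    exact le_trans h1 (by exact_mod_cast h2)
  -- induction: accumulated gain
  have key : ∀ n, ktil ≤ n → n ≤ k →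
      nsq z (partialUnion G idx ktil) + ((n - ktil : ℕ) : ℝ) * (a / kstar) ≤
        nsq z (partialUnion G idx n) := by
    intro n hn1
    induction n, hn1 using Nat.le_induction with
    | base => intro _; simp
    | succ n hn ih =>
        intro hn2
        have hnk : n < k := hn2
        have ih' := ih (Nat.le_of_succ_le hn2)
        rw [partialUnion_succ G idx hnk]
        have hdecomp : partialUnion G idx n ∪ G (idx ⟨n, hnk⟩) =
            partialUnion G idx n ∪ (G (idx ⟨n, hnk⟩) \ partialUnion G idx n) := by simp
        rw [hdecomp, nsq_union_disjoint z Finset.disjoint_sdiff]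
        have hcast : ((n + 1 - ktil : ℕ) : ℝ) = ((n - ktil : ℕ) : ℝ) + 1 := by
          have : n + 1 - ktil = (n - ktil) + 1 := by omega
          rw [this]; push_cast; ring
        rw [hcast]
        have := gain_lb n hnk
        linarith
  have hkey := key k (le_of_lt hktil2) (le_refl k)
  -- decompositions
  have hdec1 : nsq z S = b + nsq z (S ∩ Sstar) := by
    rw [hbdef, ← nsq_union_disjoint z (Finset.disjoint_sdiff_inter S Sstar),
      Finset.sdiff_union_inter]
  have hdec2 : nsq z Sstar = a + nsq z (Sstar ∩ S) := by
    rw [hadef, ← nsq_union_disjoint z (Finset.disjoint_sdiff_inter Sstar S),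
      Finset.sdiff_union_inter]
  have hinter : nsq z (Sstar ∩ S) = nsq z (S ∩ Sstar) := by rw [Finset.inter_comm]
  have hc : (0 : ℝ) < (k : ℝ) - (ktil : ℝ) := by
    have : (ktil : ℝ) < (k : ℝ) := by exact_mod_cast hktil2
    linarith
  have hccast : ((k - ktil : ℕ) : ℝ) = (k : ℝ) - (ktil : ℝ) := by
    rw [Nat.cast_sub (le_of_lt hktil2)]
  rw [hccast] at hkey
  have hfin : ((k : ℝ) - (ktil : ℝ)) * (a / kstar) ≤ b + ε := by linarith
  have h3 : a / kstar ≤ (b + ε) / ((k : ℝ) - (ktil : ℝ)) := by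
    rw [le_div_iff₀ hc]; linarith
  rw [add_div] at h3
  linarith
end
end

section
/- Let f : ℝ^p → ℝ be twice continuously differentiable, let w*, w_t ∈ ℝ^p with S* = supp(w*) and S_t = supp(w_t), let 0 < α ≤ L, and set g_t = w_t − (1/L)∇f(w_t). Let S_{t+1} ⊆ {1, …, p} and w_{t+1} = (g_t)_{S_{t+1}}. Assume: (a) the approximate projection property ‖(g_t)_{S*\S_{t+1}}‖² ≤ θ ‖(g_t)_{S_{t+1}\S*}‖² + ε for some θ ≥ 0, ε ≥ 0; and (b) for every w on the line segment between w_t and w* and every v ∈ ℝ^p supported on S_t ∪ S_{t+1} ∪ S*, α‖v‖² ≤ vᵀ∇²f(w)v ≤ L‖v‖². Then ‖w_{t+1} − w*‖ ≤ (1 + √θ) · [ (1 − α/L)‖w_t − w*‖ + (1/L)‖(∇f(w*))_{S_{t+1} ∪ S*}‖ ] + √ε. -/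
open Finset

noncomputable section

section Helpers
open RealInnerProductSpace

namespace IHT
variable {p : ℕ}

local notation "E" => EuclideanSpace ℝ (Fin p)

lemma restrict_apply (z : E) (S : Finset (Fin p)) (i : Fin p) :
    restrict z S i = if i ∈ S then z i else 0 := rfl

lemma mem_suppF {z : E} {i : Fin p} : i ∈ suppF z ↔ z i ≠ 0 := by
  classical simp [suppF]

lemma suppF_eq_zero {z : E} {i : Fin p} (h : i ∉ suppF z) : z i = 0 := by
  by_contra hz; exact h (mem_suppF.2 hz)

lemma inner_restrict_left (z y : E) (S : Finset (Fin p)) :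
    ⟪restrict z S, y⟫ = ∑ i ∈ S, z i * y i := by
  rw [PiLp.inner_apply]
  simp only [RCLike.inner_apply, conj_trivial, restrict_apply, ite_mul, zero_mul]
  simp only [mul_ite, mul_zero]
  rw [Finset.sum_ite_mem, Finset.univ_inter]
  exact Finset.sum_congr rfl fun i _ => mul_comm _ _

lemma norm_restrict_sq (z : E) (S : Finset (Fin p)) :
    ‖restrict z S‖ ^ 2 = ∑ i ∈ S, z i ^ 2 := by
  rw [← real_inner_self_eq_norm_sq, inner_restrict_left]
  refine Finset.sum_congr rfl fun i hi => ?_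
  simp [restrict_apply, hi, pow_two]

lemma inner_restrict_self (z : E) (S : Finset (Fin p)) :
    ⟪restrict z S, z⟫ = ‖restrict z S‖ ^ 2 := by
  rw [inner_restrict_left, norm_restrict_sq]
  exact Finset.sum_congr rfl fun i _ => (pow_two _).symm

lemma norm_restrict_mono (z : E) {S T : Finset (Fin p)} (h : S ⊆ T) :
    ‖restrict z S‖ ≤ ‖restrict z T‖ := by
  have h2 : ‖restrict z S‖ ^ 2 ≤ ‖restrict z T‖ ^ 2 := by
    rw [norm_restrict_sq, norm_restrict_sq]
    exact Finset.sum_le_sum_of_subset_of_nonneg h fun i _ _ => sq_nonneg _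
  nlinarith [norm_nonneg (restrict z S), norm_nonneg (restrict z T)]

lemma restrict_eq_self {z : E} {S : Finset (Fin p)} (h : suppF z ⊆ S) :
    restrict z S = z := by
  ext i
  by_cases hi : i ∈ S
  · simp [restrict_apply, hi]
  · have : z i = 0 := by
      by_contra hz
      exact hi (h (mem_suppF.2 hz))
    simp [restrict_apply, hi, this]

lemma suppF_restrict (z : E) (S : Finset (Fin p)) : suppF (restrict z S) ⊆ S := by
  intro i hi
  rw [mem_suppF] at hi
  by_contra h
  exact hi (by simp [restrict_apply, h])

lemma restrict_sub (x y : E) (S : Finset (Fin p)) :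
    restrict (x - y) S = restrict x S - restrict y S := by
  ext i
  by_cases hi : i ∈ S <;> simp [restrict_apply, hi]

lemma restrict_smul (c : ℝ) (x : E) (S : Finset (Fin p)) :
    restrict (c • x) S = c • restrict x S := by
  ext i
  by_cases hi : i ∈ S <;> simp [restrict_apply, hi]

lemma suppF_sub (x y : E) : suppF (x - y) ⊆ suppF x ∪ suppF y := by
  intro i hi
  rw [mem_suppF] at hi
  rw [Finset.mem_union, mem_suppF, mem_suppF]
  by_contra h
  push_neg at h
  exact hi (by show x i - y i = 0; rw [h.1, h.2, sub_zero])

lemma suppF_add (x y : E) : suppF (x + y) ⊆ suppF x ∪ suppF y := by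
  intro i hi
  rw [mem_suppF] at hi
  rw [Finset.mem_union, mem_suppF, mem_suppF]
  by_contra h
  push_neg at h
  exact hi (by show x i + y i = 0; rw [h.1, h.2, add_zero])

lemma suppF_smul (c : ℝ) (x : E) : suppF (c • x) ⊆ suppF x := by
  intro i hi
  rw [mem_suppF] at hi
  rw [mem_suppF]
  intro h
  exact hi (by show c • x i = 0; rw [h, smul_zero])

lemma inner_gradient (f : E → ℝ) (x v : E) :
    ⟪gradient f x, v⟫ = fderiv ℝ f x v := by
  rw [gradient]
  exact InnerProductSpace.toDual_symm_apply

set_option maxHeartbeats 1000000 in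
lemma key (f : E → ℝ) (hf : ContDiff ℝ 2 f) (wstar wt : E) (α L : ℝ)
    (hα : 0 < α) (hαL : α ≤ L) (S T : Finset (Fin p))
    (hST : S ⊆ T) (hwt : suppF wt ⊆ T) (hws : suppF wstar ⊆ T)
    (hb : ∀ w ∈ segment ℝ wt wstar, ∀ v : E, suppF v ⊆ T →
        α * ‖v‖ ^ 2 ≤ iteratedFDeriv ℝ 2 f w ![v, v] ∧
        iteratedFDeriv ℝ 2 f w ![v, v] ≤ L * ‖v‖ ^ 2) :
    ‖restrict ((wt - wstar) - (1 / L) • (gradient f wt - gradient f wstar)) S‖ ≤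
      (1 - α / L) * ‖wt - wstar‖ := by
  have hL : 0 < L := hα.trans_le hαL
  have hco : 0 ≤ 1 - α / L := by
    have : α / L ≤ 1 := (div_le_one hL).2 hαL
    linarith
  set Δ : E := wt - wstar with hΔ
  set x : E := Δ - (1 / L) • (gradient f wt - gradient f wstar) with hx
  set v : E := restrict x S with hv
  rcases eq_or_ne v 0 with h0 | h0
  · rw [h0, norm_zero]
    positivity
  have hvpos : 0 < ‖v‖ := norm_pos_iff.2 h0
  have hvT : suppF v ⊆ T := (suppF_restrict x S).trans hST
  have hΔT : suppF Δ ⊆ T := by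
    rw [hΔ]; exact (suppF_sub wt wstar).trans (Finset.union_subset hwt hws)
  have hF : ContDiff ℝ 1 (fderiv ℝ f) := hf.fderiv_right (by norm_num)
  have hsymm : ∀ w : E, ∀ a b : E,
      fderiv ℝ (fderiv ℝ f) w a b = fderiv ℝ (fderiv ℝ f) w b a := fun w a b =>
    (hf.contDiffAt.isSymmSndFDerivAt (by norm_num)) a b
  -- Cauchy–Schwarz-type bound on the derivative
  have hCS : ∀ w ∈ segment ℝ wt wstar,
      |⟪v, Δ⟫ - (1 / L) * fderiv ℝ (fderiv ℝ f) w Δ v| ≤ (1 - α / L) * ‖Δ‖ * ‖v‖ := by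
    intro w hw
    set D := fderiv ℝ (fderiv ℝ f) w with hD
    have hq : ∀ z : E, suppF z ⊆ T → α * ‖z‖ ^ 2 ≤ D z z ∧ D z z ≤ L * ‖z‖ ^ 2 := by
      intro z hz
      have h := hb w hw z hz
      simpa only [iteratedFDeriv_two_apply, Matrix.cons_val_zero, Matrix.cons_val_one,
        Matrix.head_cons, hD] using h
    have hC1 : ∀ z : E, suppF z ⊆ T → 0 ≤ ⟪z, z⟫ - (1 / L) * D z z := by
      intro z hz
      have h2 := (hq z hz).2
      have h3 : (1 / L) * D z z ≤ (1 / L) * (L * ‖z‖ ^ 2) :=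
        mul_le_mul_of_nonneg_left h2 (by positivity)
      have h4 : (1 / L) * (L * ‖z‖ ^ 2) = ‖z‖ ^ 2 := by field_simp
      rw [real_inner_self_eq_norm_sq]
      linarith
    have hC2 : ∀ z : E, suppF z ⊆ T →
        ⟪z, z⟫ - (1 / L) * D z z ≤ (1 - α / L) * ‖z‖ ^ 2 := by
      intro z hz
      have h1 := (hq z hz).1
      have h3 : (1 / L) * (α * ‖z‖ ^ 2) ≤ (1 / L) * D z z :=
        mul_le_mul_of_nonneg_left h1 (by positivity)
      have h4 : (1 / L) * (α * ‖z‖ ^ 2) = (α / L) * ‖z‖ ^ 2 := by field_simp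
      rw [real_inner_self_eq_norm_sq]
      nlinarith
    have hquad : ∀ t : ℝ,
        0 ≤ (⟪v, v⟫ - (1 / L) * D v v) * (t * t) +
            (2 * (⟪Δ, v⟫ - (1 / L) * D Δ v)) * t + (⟪Δ, Δ⟫ - (1 / L) * D Δ Δ) := by
      intro t
      have hsupp : suppF (Δ + t • v) ⊆ T :=
        (suppF_add _ _).trans (Finset.union_subset hΔT ((suppF_smul t v).trans hvT))
      have h0' := hC1 _ hsupp
      have hDexp : D (Δ + t • v) (Δ + t • v)
          = D Δ Δ + t * D Δ v + t * D v Δ + t * t * D v v := by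
        simp only [map_add, map_smul, ContinuousLinearMap.add_apply,
          ContinuousLinearMap.smul_apply, smul_eq_mul]
        ring
      have hIexp : ⟪Δ + t • v, Δ + t • v⟫
          = ⟪Δ, Δ⟫ + t * ⟪Δ, v⟫ + t * ⟪v, Δ⟫ + t * t * ⟪v, v⟫ := by
        simp only [inner_add_add_self, real_inner_smul_left, real_inner_smul_right]
        ring
      rw [hDexp, hIexp] at h0'
      have e1 : ⟪v, Δ⟫ = ⟪Δ, v⟫ := real_inner_comm _ _
      have e2 : D v Δ = D Δ v := hsymm w v Δ
      rw [e1, e2] at h0'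
      nlinarith [h0']
    have hd := discrim_le_zero hquad
    rw [discrim] at hd
    have hcs2 : (⟪Δ, v⟫ - (1 / L) * D Δ v) ^ 2
        ≤ (⟪v, v⟫ - (1 / L) * D v v) * (⟪Δ, Δ⟫ - (1 / L) * D Δ Δ) := by nlinarith [hd]
    have hmul : (⟪v, v⟫ - (1 / L) * D v v) * (⟪Δ, Δ⟫ - (1 / L) * D Δ Δ)
        ≤ ((1 - α / L) * ‖v‖ ^ 2) * ((1 - α / L) * ‖Δ‖ ^ 2) :=
      mul_le_mul (hC2 v hvT) (hC2 Δ hΔT) (hC1 Δ hΔT) (by positivity)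
    have hub : (⟪Δ, v⟫ - (1 / L) * D Δ v) ^ 2 ≤ ((1 - α / L) * ‖Δ‖ * ‖v‖) ^ 2 := by
      have he : ((1 - α / L) * ‖v‖ ^ 2) * ((1 - α / L) * ‖Δ‖ ^ 2)
          = ((1 - α / L) * ‖Δ‖ * ‖v‖) ^ 2 := by ring
      linarith [hcs2, hmul]
    have habs : |⟪Δ, v⟫ - (1 / L) * D Δ v| ≤ |(1 - α / L) * ‖Δ‖ * ‖v‖| := by
      rw [← Real.sqrt_sq_eq_abs, ← Real.sqrt_sq_eq_abs]
      exact Real.sqrt_le_sqrt hub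
    rw [real_inner_comm Δ v]
    calc |⟪Δ, v⟫ - (1 / L) * D Δ v| ≤ |(1 - α / L) * ‖Δ‖ * ‖v‖| := habs
      _ = (1 - α / L) * ‖Δ‖ * ‖v‖ := abs_of_nonneg (by positivity)
  -- the path and the scalar function
  set u : ℝ → E := fun s => wstar + s • Δ with hu
  have hu_seg : ∀ s ∈ Set.Icc (0 : ℝ) 1, u s ∈ segment ℝ wt wstar := by
    intro s hs
    refine ⟨s, 1 - s, hs.1, by linarith [hs.2], by ring, ?_⟩
    show s • wt + (1 - s) • wstar = wstar + s • Δ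
    rw [hΔ]
    module
  set φ : ℝ → ℝ := fun s => s * ⟪v, Δ⟫ - (1 / L) * (fderiv ℝ f (u s) v) with hφ
  have hderiv : ∀ s : ℝ,
      HasDerivAt φ (⟪v, Δ⟫ - (1 / L) * (fderiv ℝ (fderiv ℝ f) (u s) Δ v)) s := by
    intro s
    have h1 : HasDerivAt u Δ s := by
      have := ((hasDerivAt_id s).smul_const Δ).const_add wstar
      simpa [hu] using this
    have h2 : HasFDerivAt (fderiv ℝ f) (fderiv ℝ (fderiv ℝ f) (u s)) (u s) :=
      ((hF.differentiable (by norm_num)) (u s)).hasFDerivAt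
    have h3 : HasDerivAt (fun s => fderiv ℝ f (u s)) (fderiv ℝ (fderiv ℝ f) (u s) Δ) s :=
      h2.comp_hasDerivAt s h1
    have h4 : HasDerivAt (fun s => fderiv ℝ f (u s) v)
        (fderiv ℝ (fderiv ℝ f) (u s) Δ v) s := by
      have := h3.clm_apply (hasDerivAt_const s v)
      simpa using this
    have h5 : HasDerivAt (fun s : ℝ => s * ⟪v, Δ⟫) ⟪v, Δ⟫ s := hasDerivAt_mul_const _
    exact h5.sub (h4.const_mul (1 / L))
  have hmvt : ‖φ 1 - φ 0‖ ≤ ((1 - α / L) * ‖Δ‖ * ‖v‖) * ‖(1 : ℝ) - 0‖ := by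
    refine Convex.norm_image_sub_le_of_norm_hasDerivWithin_le
      (f' := fun s => ⟪v, Δ⟫ - (1 / L) * (fderiv ℝ (fderiv ℝ f) (u s) Δ v))
      (fun s hs => (hderiv s).hasDerivWithinAt) ?_ (convex_Icc 0 1)
      (Set.left_mem_Icc.2 zero_le_one) (Set.right_mem_Icc.2 zero_le_one)
    intro s hs
    rw [Real.norm_eq_abs]
    exact hCS (u s) (hu_seg s hs)
  have hu1 : u 1 = wt := by
    show wstar + (1 : ℝ) • Δ = wt
    rw [one_smul, hΔ]
    abel
  have hu0 : u 0 = wstar := by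
    show wstar + (0 : ℝ) • Δ = wstar
    rw [zero_smul, add_zero]
  have hφdiff : φ 1 - φ 0 = ⟪v, x⟫ := by
    simp only [hφ, hu1, hu0, one_mul, zero_mul, hx, inner_sub_right, real_inner_smul_right,
      real_inner_comm (gradient f wt) v, real_inner_comm (gradient f wstar) v, inner_gradient]
    ring
  have hnormsq : ⟪v, x⟫ = ‖v‖ ^ 2 := by
    rw [hv]; exact inner_restrict_self x S
  have hfinal : ‖v‖ ^ 2 ≤ (1 - α / L) * ‖Δ‖ * ‖v‖ := by
    have h := hmvt
    rw [hφdiff, hnormsq] at h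
    simp only [sub_zero, norm_one, mul_one] at h
    calc ‖v‖ ^ 2 ≤ |‖v‖ ^ 2| := le_abs_self _
      _ ≤ (1 - α / L) * ‖Δ‖ * ‖v‖ := by rwa [Real.norm_eq_abs] at h
  nlinarith [hfinal, hvpos]

end IHT
end Helpers

set_option maxHeartbeats 1000000 in
/-- abstract one-step IHT bound with an approximate projection property:
if `‖(g_t)_{S*\S_{t+1}}‖² ≤ θ‖(g_t)_{S_{t+1}\S*}‖² + ε` and the Hessian of `f` is between
`α` and `L` on the segment `[w_t, w*]` in directions supported on `S_t ∪ S_{t+1} ∪ S*`,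
then `‖w_{t+1} − w*‖ ≤ (1 + √θ)[(1 − α/L)‖w_t − w*‖ + (1/L)‖(∇f(w*))_{S_{t+1}∪S*}‖] + √ε`. -/

theorem stmt_11 (p : ℕ)
    (f : EuclideanSpace ℝ (Fin p) → ℝ) (hf : ContDiff ℝ 2 f)
    (wstar wt : EuclideanSpace ℝ (Fin p))
    (α L : ℝ) (hα : 0 < α) (hαL : α ≤ L)
    (gt : EuclideanSpace ℝ (Fin p)) (hgt : gt = wt - (1 / L) • gradient f wt)
    (St1 : Finset (Fin p))
    (wt1 : EuclideanSpace ℝ (Fin p)) (hwt1 : wt1 = restrict gt St1)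
    (θ ε : ℝ) (hθ : 0 ≤ θ) (hε : 0 ≤ ε)
    (ha : ‖restrict gt (suppF wstar \ St1)‖ ^ 2 ≤
        θ * ‖restrict gt (St1 \ suppF wstar)‖ ^ 2 + ε)
    (hb : ∀ w ∈ segment ℝ wt wstar, ∀ v : EuclideanSpace ℝ (Fin p),
        suppF v ⊆ suppF wt ∪ St1 ∪ suppF wstar →
        α * ‖v‖ ^ 2 ≤ iteratedFDeriv ℝ 2 f w ![v, v] ∧
        iteratedFDeriv ℝ 2 f w ![v, v] ≤ L * ‖v‖ ^ 2) :
    ‖wt1 - wstar‖ ≤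
      (1 + Real.sqrt θ) *
        ((1 - α / L) * ‖wt - wstar‖ +
          (1 / L) * ‖restrict (gradient f wstar) (St1 ∪ suppF wstar)‖) +
      Real.sqrt ε := by
  classical
  have hL : 0 < L := hα.trans_le hαL
  have hST : St1 ∪ suppF wstar ⊆ suppF wt ∪ St1 ∪ suppF wstar := fun i hi => by
    simp only [Finset.mem_union] at *; tauto
  have hwtT : suppF wt ⊆ suppF wt ∪ St1 ∪ suppF wstar := fun i hi => by
    simp only [Finset.mem_union] at *; tauto
  have hwsT : suppF wstar ⊆ suppF wt ∪ St1 ∪ suppF wstar := fun i hi => by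
    simp only [Finset.mem_union] at *; tauto
  -- decomposition
  have hdecomp : wt1 - wstar =
      restrict (gt - wstar) (St1 ∪ suppF wstar) - restrict gt (suppF wstar \ St1) := by
    ext i
    simp only [PiLp.sub_apply, hwt1, IHT.restrict_apply, Finset.mem_union, Finset.mem_sdiff]
    by_cases h1 : i ∈ St1 <;> by_cases h2 : i ∈ suppF wstar
    · simp [h1, h2]
    · simp [h1, h2]
    · simp [h1, h2]
      try ring
    · simp [h1, h2, IHT.suppF_eq_zero h2]
  have htri : ‖wt1 - wstar‖ ≤
      ‖restrict (gt - wstar) (St1 ∪ suppF wstar)‖ + ‖restrict gt (suppF wstar \ St1)‖ := by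
    rw [hdecomp]; exact norm_sub_le _ _
  -- bound the B part
  have hB : ‖restrict gt (suppF wstar \ St1)‖ ≤
      Real.sqrt θ * ‖restrict gt (St1 \ suppF wstar)‖ + Real.sqrt ε := by
    have hrhs : 0 ≤ Real.sqrt θ * ‖restrict gt (St1 \ suppF wstar)‖ + Real.sqrt ε := by
      positivity
    have e1 : Real.sqrt θ ^ 2 = θ := Real.sq_sqrt hθ
    have e2 : Real.sqrt ε ^ 2 = ε := Real.sq_sqrt hε
    have hsq : ‖restrict gt (suppF wstar \ St1)‖ ^ 2 ≤
        (Real.sqrt θ * ‖restrict gt (St1 \ suppF wstar)‖ + Real.sqrt ε) ^ 2 := by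
      have cross : 0 ≤ Real.sqrt θ * ‖restrict gt (St1 \ suppF wstar)‖ * Real.sqrt ε := by
        positivity
      nlinarith [ha, cross]
    nlinarith [norm_nonneg (restrict gt (suppF wstar \ St1)), hrhs, hsq]
  have haA : ‖restrict gt (St1 \ suppF wstar)‖ ≤
      ‖restrict (gt - wstar) (St1 ∪ suppF wstar)‖ := by
    have heq : restrict gt (St1 \ suppF wstar)
        = restrict (gt - wstar) (St1 \ suppF wstar) := by
      ext i
      simp only [IHT.restrict_apply, PiLp.sub_apply]
      split_ifs with h
      · rw [IHT.suppF_eq_zero (Finset.mem_sdiff.1 h).2, sub_zero]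
      · rfl
    rw [heq]
    exact IHT.norm_restrict_mono _ (fun i hi => by
      simp only [Finset.mem_sdiff, Finset.mem_union] at *; tauto)
  -- bound the A part
  have hgteq : gt - wstar =
      ((wt - wstar) - (1 / L) • (gradient f wt - gradient f wstar))
        - (1 / L) • gradient f wstar := by
    rw [hgt]; module
  have hA : ‖restrict (gt - wstar) (St1 ∪ suppF wstar)‖ ≤
      (1 - α / L) * ‖wt - wstar‖ +
        (1 / L) * ‖restrict (gradient f wstar) (St1 ∪ suppF wstar)‖ := by
    rw [hgteq, IHT.restrict_sub, IHT.restrict_smul]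
    refine (norm_sub_le _ _).trans ?_
    have h1 := IHT.key f hf wstar wt α L hα hαL (St1 ∪ suppF wstar)
      (suppF wt ∪ St1 ∪ suppF wstar) hST hwtT hwsT hb
    have h2 : ‖(1 / L) • restrict (gradient f wstar) (St1 ∪ suppF wstar)‖
        = (1 / L) * ‖restrict (gradient f wstar) (St1 ∪ suppF wstar)‖ := by
      rw [norm_smul, Real.norm_eq_abs, abs_of_pos (by positivity)]
    linarith
  -- combine
  have h1θ : (0:ℝ) ≤ Real.sqrt θ := Real.sqrt_nonneg θ
  have m1 : Real.sqrt θ * ‖restrict gt (St1 \ suppF wstar)‖ ≤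
      Real.sqrt θ * ‖restrict (gt - wstar) (St1 ∪ suppF wstar)‖ :=
    mul_le_mul_of_nonneg_left haA h1θ
  have m2 : (1 + Real.sqrt θ) * ‖restrict (gt - wstar) (St1 ∪ suppF wstar)‖ ≤
      (1 + Real.sqrt θ) * ((1 - α / L) * ‖wt - wstar‖ +
        (1 / L) * ‖restrict (gradient f wstar) (St1 ∪ suppF wstar)‖) :=
    mul_le_mul_of_nonneg_left hA (by positivity)
  nlinarith [htri, hB, m1, m2]
end
end
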